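/- The point w₂ = z₀ = exp(iπ/3) satisfies the figure-eight gluing equation z₀² − z₀ = 1/(w₂(w₂−1)) and the completeness equations μ(m) = z₂ w₂^{-1} = 1 and μ(l) = z₀² z₂^{-2} = 1, where z₂ = (z₀−1)/z₀ and the w-triple and z-triple follow the standard cross-ratio relations. -/
import Mathlib


/-- The point w₂ = z₀ = exp(iπ/3) satisfies the figure-eight gluing equation and the
completeness equations μ(m) = z₂w₂⁻¹ = 1 and μ(l) = z₀²z₂⁻² = 1, where z₂ = (z₀−1)/z₀. -/
theorem stmt9 :
    let w₂ : ℂ := Complex.exp (Real.pi * Complex.I / 3)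
    let z₀ : ℂ := Complex.exp (Real.pi * Complex.I / 3)
    let z₂ : ℂ := (z₀ - 1) / z₀
    z₀ ^ 2 - z₀ = 1 / (w₂ * (w₂ - 1)) ∧ z₂ * w₂⁻¹ = 1 ∧ z₀ ^ 2 * (z₂ ^ 2)⁻¹ = 1 := by
  intro w₂ z₀ z₂
  have hcube : z₀ ^ 3 = -1 := by
    show Complex.exp (Real.pi * Complex.I / 3) ^ 3 = -1
    rw [← Complex.exp_nat_mul]
    norm_num
    have : (3 : ℂ) * (Real.pi * Complex.I / 3) = Real.pi * Complex.I := by ring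
    rw [this, Complex.exp_pi_mul_I]
  have hne : z₀ ≠ -1 := by
    intro h
    have him := congrArg Complex.im h
    rw [Complex.exp_im] at him
    simp only [Complex.neg_im, Complex.one_im, neg_zero] at him
    have h1 : (Real.pi * Complex.I / 3).im = Real.pi / 3 := by
      simp [Complex.div_im, Complex.mul_im]
    have h2 : (Real.pi * Complex.I / 3).re = 0 := by
      simp [Complex.div_re, Complex.mul_re]
    rw [h1, h2] at him
    have hsin : Real.sin (Real.pi / 3) > 0 :=
      Real.sin_pos_of_pos_of_lt_pi (by positivity) (by linarith [Real.pi_pos])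
    nlinarith [Real.exp_pos (0 : ℝ)]
  have hz : z₀ ^ 2 - z₀ + 1 = 0 := by
    have : (z₀ + 1) * (z₀ ^ 2 - z₀ + 1) = 0 := by linear_combination hcube
    rcases mul_eq_zero.mp this with h | h
    · exact absurd (by linear_combination h : z₀ = -1) hne
    · exact h
  have hz0 : z₀ ≠ 0 := by
    intro h
    rw [h] at hcube
    norm_num at hcube
  have h1 : z₀ - 1 ≠ 0 := by
    intro h
    rw [sub_eq_zero] at h
    rw [h] at hz; norm_num at hz
  refine ⟨?_, ?_, ?_⟩
  · show z₀ ^ 2 - z₀ = 1 / (z₀ * (z₀ - 1))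
    rw [eq_div_iff (mul_ne_zero hz0 h1)]
    linear_combination (z₀ ^ 2 - z₀ - 1) * hz
  · show (z₀ - 1) / z₀ * z₀⁻¹ = 1
    rw [← div_eq_mul_inv, div_div, div_eq_one_iff_eq (mul_ne_zero hz0 hz0)]
    linear_combination -hz
  · show z₀ ^ 2 * (((z₀ - 1) / z₀) ^ 2)⁻¹ = 1
    rw [div_pow, inv_div, ← mul_div_assoc, div_eq_one_iff_eq (pow_ne_zero 2 h1)]
    linear_combination (z₀ ^ 2 + z₀ - 1) * hz
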